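/- Let g:[a,b]→ℝ be left-continuous and increasing with g^C p-H-Hölder, and let f:[a,b]→ℝ be g-Lipschitz continuous with constant H. Then |f(a)(g^C(b)−g^C(a)) − ∫_a^b f dg^C| ≤ H² (b−a)^p (g(b)−g(a)). -/

import Mathlib

open Set

/-- Right jump of a function: `u(t⁺) - u(t)`. -/
noncomputable def rjump (u : ℝ → ℝ) (t : ℝ) : ℝ := Function.rightLim u t - u t

/-- Cumulative jump part of `u` on `[a, t)`: `u^B(t) = Σ_{s ∈ [a,t)} Δ⁺u(s)`. -/
noncomputable def jumpPart (u : ℝ → ℝ) (a t : ℝ) : ℝ :=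
  ∑' s : ℝ, Set.indicator (Set.Ico a t) (fun v => rjump u v) s

/-- Continuous part of `u` (relative to the base point `a`): `u^C = u - u^B`. -/
noncomputable def contPart (u : ℝ → ℝ) (a t : ℝ) : ℝ := u t - jumpPart u a t

/-- `I` is the Kurzweil–Stieltjes integral `∫_a^b f dg`: for every `ε > 0` there is a
gauge `δ` such that every `δ`-fine tagged partition of `[a,b]` has Riemann–Stieltjes
sum within `ε` of `I`. -/
def IsKSIntegral (f g : ℝ → ℝ) (a b I : ℝ) : Prop :=
  ∀ ε > (0:ℝ), ∃ δ : ℝ → ℝ, (∀ x, 0 < δ x) ∧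
    ∀ (n : ℕ) (t ξ : ℕ → ℝ),
      t 0 = a → t n = b →
      (∀ i < n, t i < t (i + 1)) →
      (∀ i < n, t i ≤ ξ i ∧ ξ i ≤ t (i + 1)) →
      (∀ i < n, ξ i - δ (ξ i) < t i ∧ t (i + 1) < ξ i + δ (ξ i)) →
      |(∑ i ∈ Finset.range n, f (ξ i) * (g (t (i + 1)) - g (t i))) - I| < ε

/-- `f` is `g`-Lipschitz continuous on `[a,b]` with constant `H`. -/
def GLipschitzOn (f g : ℝ → ℝ) (H a b : ℝ) : Prop :=
  ∀ t ∈ Set.Icc a b, ∀ s ∈ Set.Icc a b, |f t - f s| ≤ H * |g t - g s|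

/-- `g` is left-continuous at every point of `s`. -/
def LeftContOn (g : ℝ → ℝ) (s : Set ℝ) : Prop :=
  ∀ t ∈ s, Filter.Tendsto g (nhdsWithin t (Set.Iio t)) (nhds (g t))

open Filter Topology

private lemma rightLim_ge {g : ℝ → ℝ} {a b u : ℝ} (hg : MonotoneOn g (Set.Icc a b))
    (hu : u ∈ Set.Ico a b) :
    g u ≤ Function.rightLim g u ∧ ∀ v ∈ Set.Ioc u b, Function.rightLim g u ≤ g v := by
  have hne : (Set.Ioo u b).Nonempty := Set.nonempty_Ioo.2 hu.2
  have hsub : Set.Ioo u b ⊆ Set.Icc a b := fun x hx => ⟨hu.1.trans hx.1.le, hx.2.le⟩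
  have hmono : MonotoneOn g (Set.Ioo u b) := hg.mono hsub
  have huab : u ∈ Set.Icc a b := ⟨hu.1, hu.2.le⟩
  have hlb : ∀ y ∈ g '' Set.Ioo u b, g u ≤ y := by
    rintro _ ⟨x, hx, rfl⟩
    exact hg huab (hsub hx) hx.1.le
  have hbdd : BddBelow (g '' Set.Ioo u b) := ⟨g u, hlb⟩
  have htd := hmono.tendsto_nhdsWithin_Ioo_right hne hbdd
  have heq : Function.rightLim g u = sInf (g '' Set.Ioo u b) :=
    rightLim_eq_of_tendsto (h := nhdsGT_neBot u) htd
  constructor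
  · rw [heq]; exact le_csInf (hne.image g) hlb
  · intro v hv
    rw [heq]
    obtain ⟨w, hw1, hw2⟩ := exists_between hv.1
    have hwIoo : w ∈ Set.Ioo u b := ⟨hw1, lt_of_lt_of_le hw2 hv.2⟩
    refine (csInf_le hbdd ⟨w, hwIoo, rfl⟩).trans ?_
    exact hg (hsub hwIoo) ⟨hu.1.trans (hw1.trans hw2).le, hv.2⟩ hw2.le

private lemma rjump_nonneg {g : ℝ → ℝ} {a b u : ℝ} (hg : MonotoneOn g (Set.Icc a b))
    (hu : u ∈ Set.Ico a b) : 0 ≤ rjump g u := by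
  have := (rightLim_ge hg hu).1
  unfold rjump; linarith

private lemma sum_rjump_le {g : ℝ → ℝ} {a b : ℝ} (hg : MonotoneOn g (Set.Icc a b))
    {s : ℝ} (has : a ≤ s) (F : Finset ℝ) :
    ∀ t, t ≤ b → s ≤ t → (↑F : Set ℝ) ⊆ Set.Ico s t →
      ∑ u ∈ F, rjump g u ≤ g t - g s := by
  classical
  induction F using Finset.induction_on_max with
  | empty =>
    intro t htb hst _
    simp only [Finset.sum_empty]
    have := hg ⟨has, hst.trans htb⟩ ⟨has.trans hst, htb⟩ hst
    linarith
  | insert m F hmax IH =>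
    intro t htb hst hsub
    have hm : m ∈ Set.Ico s t := hsub (by simp)
    have hFm : (↑F : Set ℝ) ⊆ Set.Ico s m := by
      intro x hx
      have hxF : x ∈ F := hx
      exact ⟨(hsub (by simp [hxF])).1, hmax x hxF⟩
    have hmF : m ∉ F := fun h => lt_irrefl m (hmax m h)
    rw [Finset.sum_insert hmF]
    have h1 : ∑ u ∈ F, rjump g u ≤ g m - g s := IH m (hm.2.le.trans htb) hm.1 hFm
    have h2 : rjump g m ≤ g t - g m := by
      have hrb := rightLim_ge hg (u := m) ⟨has.trans hm.1, lt_of_lt_of_le hm.2 htb⟩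
      have := hrb.2 t ⟨hm.2, htb⟩
      unfold rjump; linarith
    linarith

private lemma jump_tsum {g : ℝ → ℝ} {a b s t : ℝ} (hg : MonotoneOn g (Set.Icc a b))
    (has : a ≤ s) (hst : s ≤ t) (htb : t ≤ b) :
    Summable (Set.indicator (Set.Ico s t) (fun v => rjump g v)) ∧
      0 ≤ (∑' u, Set.indicator (Set.Ico s t) (fun v => rjump g v) u) ∧
      (∑' u, Set.indicator (Set.Ico s t) (fun v => rjump g v) u) ≤ g t - g s := by
  classical
  set J := Set.indicator (Set.Ico s t) (fun v => rjump g v) with hJ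
  have hnn : ∀ u, 0 ≤ J u := by
    intro u
    by_cases h : u ∈ Set.Ico s t
    · rw [hJ, Set.indicator_of_mem h]
      exact rjump_nonneg hg ⟨has.trans h.1, lt_of_lt_of_le h.2 htb⟩
    · rw [hJ, Set.indicator_of_notMem h]
  have hsum : ∀ F : Finset ℝ, ∑ u ∈ F, J u ≤ g t - g s := by
    intro F
    have hEq : ∑ u ∈ F, J u = ∑ u ∈ F.filter (· ∈ Set.Ico s t), rjump g u := by
      rw [Finset.sum_filter]
      refine Finset.sum_congr rfl fun u _ => ?_
      by_cases h : u ∈ Set.Ico s t <;> simp [hJ, Set.indicator_apply, h]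
    rw [hEq]
    refine sum_rjump_le hg has _ t htb hst ?_
    intro x hx
    have : x ∈ F.filter (· ∈ Set.Ico s t) := hx
    exact (Finset.mem_filter.mp this).2
  have hS : Summable J := summable_of_sum_le hnn hsum
  exact ⟨hS, tsum_nonneg hnn, Summable.tsum_le_of_sum_le hS hsum⟩

private lemma contPart_diff {g : ℝ → ℝ} {a b s t : ℝ} (hg : MonotoneOn g (Set.Icc a b))
    (has : a ≤ s) (hst : s ≤ t) (htb : t ≤ b) :
    0 ≤ contPart g a t - contPart g a s ∧
      contPart g a t - contPart g a s ≤ g t - g s := by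
  obtain ⟨hS2, hnn2, hle2⟩ := jump_tsum hg has hst htb
  obtain ⟨hS1, hnn1, hle1⟩ := jump_tsum hg (le_refl a) has (hst.trans htb)
  have hind : Set.indicator (Set.Ico a t) (fun v => rjump g v)
      = fun u => Set.indicator (Set.Ico a s) (fun v => rjump g v) u
          + Set.indicator (Set.Ico s t) (fun v => rjump g v) u := by
    rw [← Set.Ico_union_Ico_eq_Ico has hst]
    exact Set.indicator_union_of_disjoint Set.Ico_disjoint_Ico_same _
  have hsplit : jumpPart g a t = jumpPart g a s
      + ∑' u, Set.indicator (Set.Ico s t) (fun v => rjump g v) u := by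
    unfold jumpPart
    calc (∑' u, Set.indicator (Set.Ico a t) (fun v => rjump g v) u)
        = ∑' u, (Set.indicator (Set.Ico a s) (fun v => rjump g v) u
            + Set.indicator (Set.Ico s t) (fun v => rjump g v) u) := by rw [hind]
      _ = _ := Summable.tsum_add hS1 hS2
  unfold contPart
  rw [hsplit]
  constructor <;> linarith

private def Pfine (a : ℝ) (δ : ℝ → ℝ) (x : ℝ) : Prop :=
  ∃ (n : ℕ) (t ξ : ℕ → ℝ), t 0 = a ∧ t n = x ∧
    (∀ i < n, t i < t (i + 1)) ∧
    (∀ i < n, t i ≤ ξ i ∧ ξ i ≤ t (i + 1)) ∧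
    (∀ i < n, ξ i - δ (ξ i) < t i ∧ t (i + 1) < ξ i + δ (ξ i))

private lemma Pfine_self (a : ℝ) (δ : ℝ → ℝ) : Pfine a δ a :=
  ⟨0, fun _ => a, fun _ => a, rfl, rfl,
    fun i hi => absurd hi (Nat.not_lt_zero i),
    fun i hi => absurd hi (Nat.not_lt_zero i),
    fun i hi => absurd hi (Nat.not_lt_zero i)⟩

private lemma Pfine_extend {a : ℝ} {δ : ℝ → ℝ} {x y θ : ℝ} (hP : Pfine a δ x)
    (hxy : x < y) (hθ1 : x ≤ θ) (hθ2 : θ ≤ y) (hf1 : θ - δ θ < x) (hf2 : y < θ + δ θ) :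
    Pfine a δ y := by
  obtain ⟨n, t, ξ, ht0, htn, hinc, htag, hfine⟩ := hP
  refine ⟨n + 1, fun i => if i ≤ n then t i else y, fun i => if i < n then ξ i else θ,
    ?_, ?_, ?_, ?_, ?_⟩
  · simp [ht0]
  · simp
  · intro i hi
    rcases Nat.lt_succ_iff_lt_or_eq.mp hi with h | h
    · simp only [if_pos (Nat.le_of_lt h), if_pos (Nat.succ_le_of_lt h)]
      exact hinc i h
    · subst h
      simp only [le_refl, if_pos, if_neg (Nat.not_succ_le_self i), htn]
      exact hxy
  · intro i hi
    rcases Nat.lt_succ_iff_lt_or_eq.mp hi with h | h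
    · simp only [if_pos (Nat.le_of_lt h), if_pos (Nat.succ_le_of_lt h), if_pos h]
      exact htag i h
    · subst h
      simp only [le_refl, if_pos, if_neg (Nat.not_succ_le_self i), if_neg (lt_irrefl i), htn]
      exact ⟨hθ1, hθ2⟩
  · intro i hi
    rcases Nat.lt_succ_iff_lt_or_eq.mp hi with h | h
    · simp only [if_pos (Nat.le_of_lt h), if_pos (Nat.succ_le_of_lt h), if_pos h]
      exact hfine i h
    · subst h
      simp only [le_refl, if_pos, if_neg (Nat.not_succ_le_self i), if_neg (lt_irrefl i), htn]
      exact ⟨hf1, hf2⟩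

private lemma cousin_lemma {a b : ℝ} (hab : a < b) (δ : ℝ → ℝ) (hδ : ∀ x, 0 < δ x) :
    Pfine a δ b := by
  set S : Set ℝ := {x | a < x ∧ x ≤ b ∧ Pfine a δ x} with hS
  have hx0 : min b (a + δ a / 2) ∈ S := by
    have h1 : a < min b (a + δ a / 2) := lt_min hab (by linarith [hδ a])
    have h2 : min b (a + δ a / 2) < a + δ a := by
      calc min b (a + δ a / 2) ≤ a + δ a / 2 := min_le_right _ _
        _ < a + δ a := by linarith [hδ a]
    exact ⟨h1, min_le_left _ _,
      Pfine_extend (Pfine_self a δ) h1 le_rfl h1.le (by linarith [hδ a]) h2⟩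
  have hSne : S.Nonempty := ⟨_, hx0⟩
  have hbdd : BddAbove S := ⟨b, fun x hx => hx.2.1⟩
  set c := sSup S with hc
  have hcb : c ≤ b := csSup_le hSne (fun x hx => hx.2.1)
  have hac : a < c := lt_of_lt_of_le hx0.1 (le_csSup hbdd hx0)
  obtain ⟨x, hxS, hxc⟩ : ∃ x ∈ S, c - δ c < x :=
    exists_lt_of_lt_csSup hSne (by linarith [hδ c])
  have hxlec : x ≤ c := le_csSup hbdd hxS
  have hPc : Pfine a δ c := by
    rcases eq_or_lt_of_le hxlec with h | h
    · rw [← h]; exact hxS.2.2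
    · exact Pfine_extend hxS.2.2 h h.le le_rfl hxc (by linarith [hδ c])
  rcases eq_or_lt_of_le hcb with h | h
  · rwa [h] at hPc
  · exfalso
    have hcy : c < min b (c + δ c / 2) := lt_min h (by linarith [hδ c])
    have hy2 : min b (c + δ c / 2) < c + δ c := by
      calc min b (c + δ c / 2) ≤ c + δ c / 2 := min_le_right _ _
        _ < c + δ c := by linarith [hδ c]
    have hyS : min b (c + δ c / 2) ∈ S := ⟨hac.trans hcy, min_le_left _ _,
      Pfine_extend hPc hcy le_rfl hcy.le (by linarith [hδ c]) hy2⟩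
    exact absurd (le_csSup hbdd hyS) (not_le.mpr hcy)

/-- If `g : [a,b] → ℝ` is left-continuous and increasing with `g^C`
`p`-`H`-Hölder, and `f` is `g`-Lipschitz with constant `H`, then
`|f(a)(g^C(b) - g^C(a)) - ∫_a^b f dg^C| ≤ H² (b-a)^p (g(b) - g(a))`. -/
theorem onePoint_quadrature_error_gLipschitz
    (a b H p : ℝ) (hab : a ≤ b) (hH : 0 < H) (hp0 : 0 < p) (hp1 : p ≤ 1)
    (g f : ℝ → ℝ)
    (hg : MonotoneOn g (Set.Icc a b))
    (hglc : LeftContOn g (Set.Ioo a b))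
    (hgC : ∀ x ∈ Set.Icc a b, ∀ y ∈ Set.Icc a b,
      |contPart g a x - contPart g a y| ≤ H * |x - y| ^ p)
    (hf : GLipschitzOn f g H a b)
    (I : ℝ) (hI : IsKSIntegral f (contPart g a) a b I) :
    |f a * (contPart g a b - contPart g a a) - I| ≤
      H ^ 2 * (b - a) ^ p * (g b - g a) := by
  rcases eq_or_lt_of_le hab with heq | hlt
  · subst heq
    have hI0 : ∀ ε > (0:ℝ), |I| < ε := by
      intro ε hε
      obtain ⟨δ, hδ, h⟩ := hI ε hε
      have := h 0 (fun _ => a) (fun _ => a) rfl rfl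
        (fun i hi => absurd hi (Nat.not_lt_zero i))
        (fun i hi => absurd hi (Nat.not_lt_zero i))
        (fun i hi => absurd hi (Nat.not_lt_zero i))
      simpa using this
    have hIle : |I| ≤ 0 := by
      by_contra hcon
      push_neg at hcon
      exact absurd (hI0 _ hcon) (lt_irrefl _)
    have hI' : I = 0 := abs_eq_zero.mp (le_antisymm hIle (abs_nonneg _))
    simp [hI', sub_self]
  · have hgba : 0 ≤ g b - g a := by
      have := hg ⟨le_rfl, hab⟩ ⟨hab, le_rfl⟩ hab
      linarith
    set D := contPart g a b - contPart g a a with hD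
    have hDnn : 0 ≤ D := (contPart_diff hg le_rfl hab le_rfl).1
    have hDle : D ≤ H * (b - a) ^ p := by
      have h := hgC b ⟨hab, le_rfl⟩ a ⟨le_rfl, hab⟩
      rwa [← hD, abs_of_nonneg hDnn, abs_of_nonneg (by linarith : (0:ℝ) ≤ b - a)] at h
    refine le_of_forall_pos_le_add (fun ε hε => ?_)
    obtain ⟨δ, hδpos, hδ⟩ := hI ε hε
    obtain ⟨n, t, ξ, ht0, htn, hinc, htag, hfine⟩ := cousin_lemma hlt δ hδpos
    have hsumI := hδ n t ξ ht0 htn hinc htag hfine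
    have tmono : ∀ j, j ≤ n → ∀ i, i ≤ j → t i ≤ t j := by
      intro j
      induction j with
      | zero => intro _ i hi; interval_cases i; exact le_rfl
      | succ m ih =>
        intro hm i hi
        rcases eq_or_lt_of_le hi with h | h
        · subst h; exact le_rfl
        · exact (ih (Nat.le_of_succ_le hm) i (Nat.lt_succ_iff.mp h)).trans
            (hinc m (Nat.lt_of_succ_le hm)).le
    have htmem : ∀ i, i ≤ n → t i ∈ Set.Icc a b := by
      intro i hi
      constructor
      · rw [← ht0]; exact tmono i hi 0 (Nat.zero_le i)
      · rw [← htn]; exact tmono n le_rfl i hi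
    have hξmem : ∀ i, i < n → ξ i ∈ Set.Icc a b := by
      intro i hi
      obtain ⟨h1, h2⟩ := htag i hi
      exact ⟨le_trans (htmem i hi.le).1 h1, le_trans h2 (htmem (i + 1) hi).2⟩
    have hΔ : ∀ i, i < n → 0 ≤ contPart g a (t (i + 1)) - contPart g a (t i) :=
      fun i hi => (contPart_diff hg (htmem i hi.le).1 (hinc i hi).le (htmem (i + 1) hi).2).1
    have htel : ∑ i ∈ Finset.range n,
        (contPart g a (t (i + 1)) - contPart g a (t i)) = D := by
      rw [Finset.sum_range_sub (fun i => contPart g a (t i)) n, htn, ht0]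
    have key : |f a * D - ∑ i ∈ Finset.range n,
        f (ξ i) * (contPart g a (t (i + 1)) - contPart g a (t i))| ≤
        H ^ 2 * (b - a) ^ p * (g b - g a) := by
      have hrw : f a * D - (∑ i ∈ Finset.range n,
          f (ξ i) * (contPart g a (t (i + 1)) - contPart g a (t i)))
          = ∑ i ∈ Finset.range n,
            (f a - f (ξ i)) * (contPart g a (t (i + 1)) - contPart g a (t i)) := by
        rw [← htel, Finset.mul_sum, ← Finset.sum_sub_distrib]
        exact Finset.sum_congr rfl fun i _ => by ring
      rw [hrw]
      calc |∑ i ∈ Finset.range n,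
            (f a - f (ξ i)) * (contPart g a (t (i + 1)) - contPart g a (t i))|
          ≤ ∑ i ∈ Finset.range n,
            |(f a - f (ξ i)) * (contPart g a (t (i + 1)) - contPart g a (t i))| :=
          Finset.abs_sum_le_sum_abs _ _
        _ ≤ ∑ i ∈ Finset.range n,
            (H * (g b - g a)) * (contPart g a (t (i + 1)) - contPart g a (t i)) := by
          refine Finset.sum_le_sum fun i hi => ?_
          have hi' : i < n := Finset.mem_range.mp hi
          rw [abs_mul, abs_of_nonneg (hΔ i hi')]
          refine mul_le_mul_of_nonneg_right ?_ (hΔ i hi')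
          have hfb := hf a ⟨le_rfl, hab⟩ (ξ i) (hξmem i hi')
          have hgξ : g a ≤ g (ξ i) := hg ⟨le_rfl, hab⟩ (hξmem i hi') (hξmem i hi').1
          have hgξb : g (ξ i) ≤ g b := hg (hξmem i hi') ⟨hab, le_rfl⟩ (hξmem i hi').2
          have habs : |g a - g (ξ i)| = g (ξ i) - g a := by
            rw [abs_sub_comm, abs_of_nonneg (by linarith)]
          rw [habs] at hfb
          calc |f a - f (ξ i)| ≤ H * (g (ξ i) - g a) := hfb
            _ ≤ H * (g b - g a) := by nlinarith
        _ = (H * (g b - g a)) * ∑ i ∈ Finset.range n,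
            (contPart g a (t (i + 1)) - contPart g a (t i)) := by
          rw [Finset.mul_sum]
        _ = (H * (g b - g a)) * D := by rw [htel]
        _ ≤ (H * (g b - g a)) * (H * (b - a) ^ p) :=
          mul_le_mul_of_nonneg_left hDle (mul_nonneg hH.le hgba)
        _ = H ^ 2 * (b - a) ^ p * (g b - g a) := by ring
    calc |f a * D - I|
        ≤ |f a * D - ∑ i ∈ Finset.range n,
            f (ξ i) * (contPart g a (t (i + 1)) - contPart g a (t i))|
          + |(∑ i ∈ Finset.range n,
            f (ξ i) * (contPart g a (t (i + 1)) - contPart g a (t i))) - I| :=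
          abs_sub_le _ _ _
      _ ≤ H ^ 2 * (b - a) ^ p * (g b - g a) + ε := add_le_add key hsumI.le
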